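/- Let Σ be a generically strongly accessible polynomial control system on ℝ^n. Then the set of strong-accessibility singular points coincides with the set of accessibility singular points: S_∞^* = S_∞. -/

import Mathlib

open MvPolynomial

/-- Evaluation of a polynomial vector field at a point of `ℝ^n`. -/
noncomputable def pvfEval {n : ℕ} (X : Fin n → MvPolynomial (Fin n) ℝ) (a : Fin n → ℝ) :
    Fin n → ℝ := fun i => eval a (X i)

/-- Lie bracket of polynomial vector fields:
`[X,Y]_j = ∑ i, (X i * ∂Y_j/∂x_i − Y i * ∂X_j/∂x_i)`. -/
noncomputable def pBracket {n : ℕ} (X Y : Fin n → MvPolynomial (Fin n) ℝ) :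
    Fin n → MvPolynomial (Fin n) ℝ :=
  fun j => ∑ i, (X i * pderiv i (Y j) - Y i * pderiv i (X j))

/-- Lie derivative of a polynomial along a polynomial vector field:
`L_X p = ∑ i, X i * ∂p/∂x_i`. -/
noncomputable def pLieDeriv {n : ℕ} (X : Fin n → MvPolynomial (Fin n) ℝ)
    (p : MvPolynomial (Fin n) ℝ) : MvPolynomial (Fin n) ℝ :=
  ∑ i, X i * pderiv i p

/-- An ideal `I` is invariant under `L_X` if `L_X p ∈ I` for every `p ∈ I`. -/
def IdealInvariant {n : ℕ} (X : Fin n → MvPolynomial (Fin n) ℝ)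
    (I : Ideal (MvPolynomial (Fin n) ℝ)) : Prop :=
  ∀ p ∈ I, pLieDeriv X p ∈ I

/-- The algebraic set `𝕍(J)` of an ideal `J`. -/
def zeroSet {n : ℕ} (J : Ideal (MvPolynomial (Fin n) ℝ)) : Set (Fin n → ℝ) :=
  {a | ∀ p ∈ J, eval a p = 0}

/-- The vanishing ideal `𝕀(A)` of a set `A ⊆ ℝ^n`. -/
noncomputable def zeroIdeal {n : ℕ} (A : Set (Fin n → ℝ)) :
    Ideal (MvPolynomial (Fin n) ℝ) where
  carrier := {p | ∀ a ∈ A, eval a p = 0}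
  add_mem' := fun hp hq a ha => by simp [hp a ha, hq a ha]
  zero_mem' := fun a ha => by simp
  smul_mem' := fun c p hp a ha => by simp [smul_eq_mul, hp a ha]

/-- The family `𝒞^k` of Lie brackets of depth at most `k` of the system vector fields
`f, g_1, …, g_m`: `𝒞^0 = {f, g_1, …, g_m}` and
`𝒞^{k+1} = 𝒞^k ∪ {[X,h] : X ∈ {f, g_1, …, g_m}, h ∈ 𝒞^k}`. -/
def accFam {n m : ℕ} (f : Fin n → MvPolynomial (Fin n) ℝ)
    (g : Fin m → Fin n → MvPolynomial (Fin n) ℝ) :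
    ℕ → Set (Fin n → MvPolynomial (Fin n) ℝ)
  | 0 => insert f (Set.range g)
  | k + 1 => accFam f g k ∪
      {h | ∃ X ∈ insert f (Set.range g), ∃ h' ∈ accFam f g k, h = pBracket X h'}

/-- `C^k(a) = span_ℝ {h(a) : h ∈ 𝒞^k}`. -/
noncomputable def accSpan {n m : ℕ} (f : Fin n → MvPolynomial (Fin n) ℝ)
    (g : Fin m → Fin n → MvPolynomial (Fin n) ℝ) (k : ℕ) (a : Fin n → ℝ) :
    Submodule ℝ (Fin n → ℝ) :=
  Submodule.span ℝ ((fun h => pvfEval h a) '' accFam f g k)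

/-- `C(a) = span_ℝ {h(a) : h ∈ 𝒞}`, where `𝒞 = ⋃ k, 𝒞^k`. -/
noncomputable def accSpanInf {n m : ℕ} (f : Fin n → MvPolynomial (Fin n) ℝ)
    (g : Fin m → Fin n → MvPolynomial (Fin n) ℝ) (a : Fin n → ℝ) :
    Submodule ℝ (Fin n → ℝ) :=
  Submodule.span ℝ ((fun h => pvfEval h a) '' ⋃ k, accFam f g k)

/-- `S_k^{<l} = {a : dim C^k(a) < l}`. -/
def singularSetLt {n m : ℕ} (f : Fin n → MvPolynomial (Fin n) ℝ)
    (g : Fin m → Fin n → MvPolynomial (Fin n) ℝ) (k l : ℕ) : Set (Fin n → ℝ) :=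
  {a | Module.finrank ℝ (accSpan f g k a) < l}

/-- `S_∞^{<l} = {a : dim C(a) < l}`;  `S_∞ = S_∞^{<n}`. -/
def singularSetInfLt {n m : ℕ} (f : Fin n → MvPolynomial (Fin n) ℝ)
    (g : Fin m → Fin n → MvPolynomial (Fin n) ℝ) (l : ℕ) : Set (Fin n → ℝ) :=
  {a | Module.finrank ℝ (accSpanInf f g a) < l}

/-- The family `𝒞_0^k`: `𝒞_0^0 = {g_1, …, g_m}` and
`𝒞_0^{k+1} = 𝒞_0^k ∪ {[X,h] : X ∈ {f, g_1, …, g_m}, h ∈ 𝒞_0^k}`. -/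
def strongAccFam {n m : ℕ} (f : Fin n → MvPolynomial (Fin n) ℝ)
    (g : Fin m → Fin n → MvPolynomial (Fin n) ℝ) :
    ℕ → Set (Fin n → MvPolynomial (Fin n) ℝ)
  | 0 => Set.range g
  | k + 1 => strongAccFam f g k ∪
      {h | ∃ X ∈ insert f (Set.range g), ∃ h' ∈ strongAccFam f g k, h = pBracket X h'}

/-- `C_0^k(a) = span_ℝ {h(a) : h ∈ 𝒞_0^k}`. -/
noncomputable def strongAccSpan {n m : ℕ} (f : Fin n → MvPolynomial (Fin n) ℝ)
    (g : Fin m → Fin n → MvPolynomial (Fin n) ℝ) (k : ℕ) (a : Fin n → ℝ) :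
    Submodule ℝ (Fin n → ℝ) :=
  Submodule.span ℝ ((fun h => pvfEval h a) '' strongAccFam f g k)

/-- `C_0(a) = span_ℝ {h(a) : h ∈ 𝒞_0}`. -/
noncomputable def strongAccSpanInf {n m : ℕ} (f : Fin n → MvPolynomial (Fin n) ℝ)
    (g : Fin m → Fin n → MvPolynomial (Fin n) ℝ) (a : Fin n → ℝ) :
    Submodule ℝ (Fin n → ℝ) :=
  Submodule.span ℝ ((fun h => pvfEval h a) '' ⋃ k, strongAccFam f g k)

/-- `S_k^{*<l} = {a : dim C_0^k(a) < l}`. -/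
def strongSingularSetLt {n m : ℕ} (f : Fin n → MvPolynomial (Fin n) ℝ)
    (g : Fin m → Fin n → MvPolynomial (Fin n) ℝ) (k l : ℕ) : Set (Fin n → ℝ) :=
  {a | Module.finrank ℝ (strongAccSpan f g k a) < l}

/-- `S_∞^{*<l} = {a : dim C_0(a) < l}`;  `S_∞^* = S_∞^{*<n}`. -/
def strongSingularSetInfLt {n m : ℕ} (f : Fin n → MvPolynomial (Fin n) ℝ)
    (g : Fin m → Fin n → MvPolynomial (Fin n) ℝ) (l : ℕ) : Set (Fin n → ℝ) :=
  {a | Module.finrank ℝ (strongAccSpanInf f g a) < l}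

section Part1

variable {n : ℕ}

lemma pLieDeriv_add (X : Fin n → MvPolynomial (Fin n) ℝ) (p q : MvPolynomial (Fin n) ℝ) :
    pLieDeriv X (p + q) = pLieDeriv X p + pLieDeriv X q := by
  simp [pLieDeriv, mul_add, Finset.sum_add_distrib]

lemma pLieDeriv_zero (X : Fin n → MvPolynomial (Fin n) ℝ) :
    pLieDeriv X (0 : MvPolynomial (Fin n) ℝ) = 0 := by
  simp [pLieDeriv]

lemma pLieDeriv_sub (X : Fin n → MvPolynomial (Fin n) ℝ) (p q : MvPolynomial (Fin n) ℝ) :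
    pLieDeriv X (p - q) = pLieDeriv X p - pLieDeriv X q := by
  simp [pLieDeriv, mul_sub, Finset.sum_sub_distrib]

lemma pLieDeriv_sum {ι : Type*} (X : Fin n → MvPolynomial (Fin n) ℝ) (s : Finset ι)
    (u : ι → MvPolynomial (Fin n) ℝ) :
    pLieDeriv X (∑ b ∈ s, u b) = ∑ b ∈ s, pLieDeriv X (u b) := by
  unfold pLieDeriv
  simp only [map_sum, Finset.mul_sum]
  rw [Finset.sum_comm]

lemma pLieDeriv_mul (X : Fin n → MvPolynomial (Fin n) ℝ) (p q : MvPolynomial (Fin n) ℝ) :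
    pLieDeriv X (p * q) = p * pLieDeriv X q + q * pLieDeriv X p := by
  unfold pLieDeriv
  simp only [pderiv_mul, mul_add, Finset.sum_add_distrib, Finset.mul_sum]
  rw [add_comm]
  congr 1 <;> exact Finset.sum_congr rfl fun i _ => by ring

lemma pLieDeriv_intCast_mul (X : Fin n → MvPolynomial (Fin n) ℝ) (z : ℤ)
    (q : MvPolynomial (Fin n) ℝ) :
    pLieDeriv X ((z : MvPolynomial (Fin n) ℝ) * q) = (z : MvPolynomial (Fin n) ℝ) * pLieDeriv X q := by
  rw [pLieDeriv_mul]
  have hz : ((z : MvPolynomial (Fin n) ℝ)) = C ((z : ℝ)) :=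
    (map_intCast (C : ℝ →+* MvPolynomial (Fin n) ℝ) z).symm
  have h0 : pLieDeriv X ((z : MvPolynomial (Fin n) ℝ)) = 0 := by
    rw [hz]; simp [pLieDeriv, pderiv_C]
  rw [h0]
  ring

lemma pderiv_comm' (i j : Fin n) (p : MvPolynomial (Fin n) ℝ) :
    pderiv i (pderiv j p) = pderiv j (pderiv i p) := by
  induction p using MvPolynomial.induction_on' with
  | add p q hp hq => simp [map_add, hp, hq]
  | monomial s a =>
    rcases eq_or_ne i j with rfl | hij
    · rfl
    · simp only [pderiv_monomial]
      have h1 : (s - Finsupp.single j 1 : Fin n →₀ ℕ) i = s i := by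
        rw [Finsupp.tsub_apply, Finsupp.single_eq_of_ne' hij.symm, Nat.sub_zero]
      have h2 : (s - Finsupp.single i 1 : Fin n →₀ ℕ) j = s j := by
        rw [Finsupp.tsub_apply, Finsupp.single_eq_of_ne' hij, Nat.sub_zero]
      rw [h1, h2, tsub_tsub, tsub_tsub, add_comm (Finsupp.single j 1)]
      congr 1
      ring

lemma pLieDeriv_pBracket (X Y : Fin n → MvPolynomial (Fin n) ℝ) (p : MvPolynomial (Fin n) ℝ) :
    pLieDeriv (pBracket X Y) p =
      pLieDeriv X (pLieDeriv Y p) - pLieDeriv Y (pLieDeriv X p) := by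
  have key : ∀ U V : Fin n → MvPolynomial (Fin n) ℝ,
      pLieDeriv U (pLieDeriv V p)
        = (∑ j, ∑ i, U i * pderiv i (V j) * pderiv j p)
          + ∑ j, ∑ i, U i * V j * pderiv i (pderiv j p) := by
    intro U V
    unfold pLieDeriv
    simp only [map_sum, pderiv_mul, Finset.mul_sum, mul_add, Finset.sum_add_distrib]
    rw [Finset.sum_comm (γ := Fin n)]
    rw [Finset.sum_comm (γ := Fin n) (f := fun i j => U i * (V j * pderiv i (pderiv j p)))]
    congr 1 <;> exact Finset.sum_congr rfl fun jj _ => Finset.sum_congr rfl fun ii _ => by ring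
  rw [key X Y, key Y X]
  have hswap : (∑ j, ∑ i, Y i * X j * pderiv i (pderiv j p))
      = ∑ j, ∑ i, X i * Y j * pderiv i (pderiv j p) := by
    rw [Finset.sum_comm]
    exact Finset.sum_congr rfl fun j _ => Finset.sum_congr rfl fun i _ => by
      rw [pderiv_comm']; ring
  rw [hswap]
  have hL : pLieDeriv (pBracket X Y) p
      = (∑ j, ∑ i, X i * pderiv i (Y j) * pderiv j p)
        - ∑ j, ∑ i, Y i * pderiv i (X j) * pderiv j p := by
    unfold pLieDeriv pBracket
    rw [← Finset.sum_sub_distrib]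
    exact Finset.sum_congr rfl fun j _ => by
      rw [Finset.sum_mul, ← Finset.sum_sub_distrib]
      exact Finset.sum_congr rfl fun i _ => by ring
  rw [hL]
  abel

lemma pBracket_self (X : Fin n → MvPolynomial (Fin n) ℝ) : pBracket X X = 0 := by
  funext j; simp [pBracket]

lemma pBracket_antisymm (X Y : Fin n → MvPolynomial (Fin n) ℝ) :
    pBracket X Y = -pBracket Y X := by
  funext j
  simp only [pBracket, Pi.neg_apply, ← Finset.sum_neg_distrib]
  exact Finset.sum_congr rfl fun i _ => by ring

lemma pBracket_zero_right (X : Fin n → MvPolynomial (Fin n) ℝ) : pBracket X 0 = 0 := by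
  funext j; simp [pBracket]

lemma pBracket_neg_right (X Y : Fin n → MvPolynomial (Fin n) ℝ) :
    pBracket X (-Y) = -pBracket X Y := by
  funext j
  simp only [pBracket, Pi.neg_apply, map_neg, ← Finset.sum_neg_distrib]
  exact Finset.sum_congr rfl fun i _ => by ring

lemma pBracket_add_right (X Y Z : Fin n → MvPolynomial (Fin n) ℝ) :
    pBracket X (Y + Z) = pBracket X Y + pBracket X Z := by
  funext j
  simp only [pBracket, Pi.add_apply, map_add, ← Finset.sum_add_distrib]
  exact Finset.sum_congr rfl fun i _ => by ring

lemma pBracket_smul_right (X Y : Fin n → MvPolynomial (Fin n) ℝ) (p : MvPolynomial (Fin n) ℝ) :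
    pBracket X (p • Y) = p • pBracket X Y + (pLieDeriv X p) • Y := by
  funext j
  simp only [pBracket, pLieDeriv, Pi.add_apply, Pi.smul_apply, smul_eq_mul, pderiv_mul,
    Finset.sum_mul, Finset.mul_sum, ← Finset.sum_add_distrib]
  exact Finset.sum_congr rfl fun i _ => by ring

end Part1

section Part2

open Finset Equiv

variable {n : ℕ}

lemma pLieDeriv_prod {ι : Type*} [DecidableEq ι] (X : Fin n → MvPolynomial (Fin n) ℝ)
    (s : Finset ι) (u : ι → MvPolynomial (Fin n) ℝ) :
    pLieDeriv X (∏ i ∈ s, u i) = ∑ i ∈ s, pLieDeriv X (u i) * ∏ j ∈ s.erase i, u j := by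
  induction s using Finset.induction_on with
  | empty => simp [pLieDeriv, pderiv_one]
  | @insert a s ha ih =>
    rw [Finset.prod_insert ha, pLieDeriv_mul, ih, Finset.sum_insert ha,
      Finset.erase_insert ha]
    rw [Finset.mul_sum]
    have : ∀ i ∈ s, u a * (pLieDeriv X (u i) * ∏ j ∈ s.erase i, u j)
        = pLieDeriv X (u i) * ∏ j ∈ (insert a s).erase i, u j := by
      intro i hi
      have hai : a ≠ i := fun h => ha (h ▸ hi)
      rw [Finset.erase_insert_of_ne hai, Finset.prod_insert
        (fun h => ha (Finset.mem_of_mem_erase h))]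
      ring
    rw [Finset.sum_congr rfl this]
    ring

lemma pLieDeriv_det (X : Fin n → MvPolynomial (Fin n) ℝ)
    (A : Matrix (Fin n) (Fin n) (MvPolynomial (Fin n) ℝ)) :
    pLieDeriv X A.det = ∑ r, (A.updateRow r (fun j => pLieDeriv X (A r j))).det := by
  rw [Matrix.det_apply']
  rw [pLieDeriv_sum]
  have hterm : ∀ σ : Perm (Fin n),
      pLieDeriv X (((Perm.sign σ : ℤ) : MvPolynomial (Fin n) ℝ) * ∏ i, A (σ i) i)
      = ((Perm.sign σ : ℤ) : MvPolynomial (Fin n) ℝ) *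
          ∑ k, pLieDeriv X (A (σ k) k) * ∏ j ∈ Finset.univ.erase k, A (σ j) j := by
    intro σ
    rw [pLieDeriv_intCast_mul, pLieDeriv_prod]
  rw [Finset.sum_congr rfl fun σ _ => hterm σ]
  -- now compute RHS
  have hRHS : ∀ r, (A.updateRow r (fun j => pLieDeriv X (A r j))).det
      = ∑ σ : Perm (Fin n), ((Perm.sign σ : ℤ) : MvPolynomial (Fin n) ℝ) *
          ∏ i, (if σ i = r then pLieDeriv X (A r i) else A (σ i) i) := by
    intro r
    rw [Matrix.det_apply']
    refine Finset.sum_congr rfl fun σ _ => ?_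
    congr 1
    refine Finset.prod_congr rfl fun i _ => ?_
    rw [Matrix.updateRow_apply]
  rw [Finset.sum_congr rfl fun r _ => hRHS r]
  rw [Finset.sum_comm]
  refine Finset.sum_congr rfl fun σ _ => ?_
  rw [Finset.mul_sum]
  -- reindex r = σ k
  rw [← Equiv.sum_comp σ (fun r => ((Perm.sign σ : ℤ) : MvPolynomial (Fin n) ℝ) *
      ∏ i, (if σ i = r then pLieDeriv X (A r i) else A (σ i) i))]
  refine Finset.sum_congr rfl fun k _ => ?_
  congr 1
  have : ∀ i, (if σ i = σ k then pLieDeriv X (A (σ k) i) else A (σ i) i)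
      = (if i = k then pLieDeriv X (A (σ k) i) else A (σ i) i) := by
    intro i
    by_cases h : i = k
    · simp [h]
    · rw [if_neg h, if_neg (fun hh => h (σ.injective hh))]
  rw [Finset.prod_congr rfl fun i _ => this i,
    ← Finset.mul_prod_erase Finset.univ _ (Finset.mem_univ k), if_pos rfl]
  congr 1
  exact Finset.prod_congr rfl fun i hi => (if_neg (Finset.ne_of_mem_erase hi)).symm

end Part2

section Part3

open Finset Matrix

variable {n : ℕ} {α : Type*} [CommRing α]

lemma det_updateRow_eq_sum (A : Matrix (Fin n) (Fin n) α) (r : Fin n) (v : Fin n → α) :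
    (A.updateRow r v).det = ∑ j, v j * A.adjugate j r := by
  rw [← Matrix.cramer_transpose_apply, Matrix.cramer_eq_adjugate_mulVec,
    ← Matrix.adjugate_transpose]
  simp [Matrix.mulVec, dotProduct, Matrix.transpose_apply, mul_comm]

lemma sum_det_updateRow_mul (A C : Matrix (Fin n) (Fin n) α) :
    ∑ r, (A.updateRow r ((A * C) r)).det = C.trace * A.det := by
  have h1 : ∀ r, (A.updateRow r ((A * C) r)).det = ∑ j, (A * C) r j * A.adjugate j r :=
    fun r => det_updateRow_eq_sum A r _
  rw [Finset.sum_congr rfl fun r _ => h1 r]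
  have h2 : (∑ r, ∑ j, (A * C) r j * A.adjugate j r) = ((A * C) * A.adjugate).trace := by
    rw [Matrix.trace]
    exact Finset.sum_congr rfl fun r _ => by rw [Matrix.diag, Matrix.mul_apply]
  rw [h2, Matrix.trace_mul_comm, ← Matrix.mul_assoc, Matrix.adjugate_mul,
    Matrix.smul_mul, Matrix.one_mul, Matrix.trace_smul]
  simp [mul_comm]

end Part3

section Part4

open Finset MvPolynomial

variable {n : ℕ}

lemma coeff_pderiv (j : Fin n) (p : MvPolynomial (Fin n) ℝ) (β : Fin n →₀ ℕ) :
    coeff β (pderiv j p) = ((β j : ℝ) + 1) * coeff (β + Finsupp.single j 1) p := by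
  induction p using MvPolynomial.induction_on' with
  | add p q hp hq => simp [map_add, hp, hq, mul_add]
  | monomial s a =>
    rw [pderiv_monomial, coeff_monomial, coeff_monomial]
    by_cases h : s = β + Finsupp.single j 1
    · subst h
      rw [if_pos (add_tsub_cancel_right β (Finsupp.single j 1)), if_pos rfl]
      have hsj : ((β + Finsupp.single j 1 : Fin n →₀ ℕ)) j = β j + 1 := by
        rw [Finsupp.add_apply, Finsupp.single_eq_same]
      rw [hsj]
      push_cast
      ring
    · rw [if_neg h, mul_zero]
      by_cases hs : s j = 0
      · split <;> simp [hs]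
      · have : ¬ (s - Finsupp.single j 1 = β) := by
          intro hβ
          apply h
          rw [← hβ, tsub_add_cancel_of_le (Finsupp.single_le_iff.2 (by omega))]
        rw [if_neg this]

lemma degS_add (u v : Fin n →₀ ℕ) : (∑ i, (u + v) i) = (∑ i, u i) + ∑ i, v i := by
  simp [Finsupp.add_apply, Finset.sum_add_distrib]

lemma degS_single (j : Fin n) : (∑ i, (Finsupp.single j 1 : Fin n →₀ ℕ) i) = 1 := by
  rw [Finset.sum_eq_single j]
  · exact Finsupp.single_eq_same
  · intro b _ hb; exact Finsupp.single_eq_of_ne' (Ne.symm hb)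
  · intro h; exact absurd (Finset.mem_univ j) h

lemma degS_eq_zero {u : Fin n →₀ ℕ} (h : (∑ i, u i) = 0) : u = 0 := by
  ext i
  have := Finset.sum_eq_zero_iff.1 h i (Finset.mem_univ i)
  simpa using this

lemma crux0 (S : Set (MvPolynomial (Fin n) ℝ)) (X : Fin n → Fin n → MvPolynomial (Fin n) ℝ)
    (hS0 : ∀ p ∈ S, coeff 0 p = 0)
    (hSX : ∀ i, ∀ p ∈ S, pLieDeriv (X i) p ∈ S)
    (hXb : LinearIndependent ℝ fun i => pvfEval (X i) 0) :
    ∀ p ∈ S, p = 0 := by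
  classical
  set c : Matrix (Fin n) (Fin n) ℝ := Matrix.of fun i j => coeff 0 (X i j) with hc
  have hcrow : (fun i => c i) = fun i => pvfEval (X i) 0 := by
    funext i; funext j
    simp only [hc, Matrix.of_apply, pvfEval, eval_zero, constantCoeff_eq]
  have hcu : IsUnit c := by
    rw [← Matrix.linearIndependent_rows_iff_isUnit]
    have h : LinearIndependent ℝ (fun i => c i) := by rw [hcrow]; exact hXb
    exact h
  have main : ∀ k : ℕ, ∀ p ∈ S, ∀ α : Fin n →₀ ℕ, (∑ i, α i) < k → coeff α p = 0 := by
    intro k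
    induction k with
    | zero => intro p hp α hα; omega
    | succ k ih =>
      intro p hp α hα
      have hpd : ∀ β : Fin n →₀ ℕ, (∑ i, β i) < k → ∀ j, coeff β (pderiv j p) = 0 := by
        intro β hβ
        set y : Fin n → ℝ := fun j => coeff β (pderiv j p) with hy
        have hmul : c.mulVec y = 0 := by
          funext i
          have hLp : coeff β (pLieDeriv (X i) p) = 0 :=
            ih _ (hSX i p hp) β (by omega)
          rw [pLieDeriv, coeff_sum] at hLp
          have hterm : ∀ j, coeff β (X i j * pderiv j p) = c i j * y j := by
            intro j
            rw [coeff_mul]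
            rw [Finset.sum_eq_single ((0 : Fin n →₀ ℕ), β)]
            · rfl
            · rintro ⟨u, v⟩ huv hne
              have huvβ : u + v = β := Finset.HasAntidiagonal.mem_antidiagonal.1 huv
              have hu : u ≠ 0 := by
                rintro rfl
                exact hne (by rw [zero_add] at huvβ; rw [huvβ])
              have hu1 : 1 ≤ ∑ i', u i' := by
                rcases Nat.eq_zero_or_pos (∑ i', u i') with h0 | h1
                · exact absurd (degS_eq_zero h0) hu
                · omega
              have hv : coeff v (pderiv j p) = 0 := by
                rw [_root_.coeff_pderiv]
                have : (∑ i', ((v + Finsupp.single j 1 : Fin n →₀ ℕ)) i') < k := by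
                  rw [degS_add, degS_single]
                  have := degS_add u v
                  rw [huvβ] at this
                  omega
                rw [ih p hp _ this, mul_zero]
              rw [hv, mul_zero]
            · intro hmem
              exact absurd (Finset.HasAntidiagonal.mem_antidiagonal.2 (zero_add β)) hmem
          rw [Finset.sum_congr rfl fun j _ => hterm j] at hLp
          exact hLp
        have hinj : Function.Injective c.mulVec :=
          Matrix.mulVec_injective_iff_isUnit.2 hcu
        have hy0 : y = 0 := hinj (by rw [hmul, Matrix.mulVec_zero])
        intro j
        exact congrFun hy0 j
      by_cases hk : (∑ i, α i) < k
      · exact ih p hp α hk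
      have hαk : (∑ i, α i) = k := by omega
      by_cases hα0 : α = 0
      · subst hα0
        exact hS0 p hp
      · obtain ⟨j, hj⟩ : ∃ j, α j ≠ 0 := by
          by_contra hno
          push_neg at hno
          exact hα0 (by ext i; simpa using hno i)
        have hle : Finsupp.single j 1 ≤ α := Finsupp.single_le_iff.2 (by omega)
        set β : Fin n →₀ ℕ := α - Finsupp.single j 1 with hβ
        have hαβ : β + Finsupp.single j 1 = α := tsub_add_cancel_of_le hle
        have hβdeg : (∑ i, β i) < k := by
          have h1 : (∑ i, ((β + Finsupp.single j 1 : Fin n →₀ ℕ)) i) = ∑ i, α i := by rw [hαβ]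
          rw [degS_add, degS_single] at h1
          have hk1 : 1 ≤ k := by
            rcases Nat.eq_zero_or_pos k with rfl | h
            · exact absurd (degS_eq_zero hαk) hα0
            · omega
          omega
        have h0 := hpd β hβdeg j
        rw [_root_.coeff_pderiv, hαβ] at h0
        have hne : ((β j : ℝ) + 1) ≠ 0 := by positivity
        exact (mul_eq_zero.1 h0).resolve_left hne
  intro p hp
  apply MvPolynomial.ext
  intro α
  rw [coeff_zero]
  exact main ((∑ i, α i) + 1) p hp α (by omega)

end Part4

section Part5

open MvPolynomial

variable {n : ℕ}

noncomputable def shiftHom (a : Fin n → ℝ) :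
    MvPolynomial (Fin n) ℝ →ₐ[ℝ] MvPolynomial (Fin n) ℝ :=
  aeval (fun i => X i + C (a i))

lemma aeval_eq_eval' (b : Fin n → ℝ) (q : MvPolynomial (Fin n) ℝ) :
    aeval b q = eval b q := by
  rw [← coe_aeval_eq_eval]; rfl

lemma shiftHom_eval (a : Fin n → ℝ) (p : MvPolynomial (Fin n) ℝ) :
    coeff 0 (shiftHom a p) = eval a p := by
  have e1 : coeff 0 (shiftHom a p) = constantCoeff (shiftHom a p) :=
    (congrFun constantCoeff_eq (shiftHom a p)).symm.trans rfl
  have e2 : constantCoeff (shiftHom a p) = eval (0 : Fin n → ℝ) (shiftHom a p) :=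
    (RingHom.congr_fun eval_zero (shiftHom a p)).symm
  have h : (aeval (0 : Fin n → ℝ) : MvPolynomial (Fin n) ℝ →ₐ[ℝ] ℝ).comp (shiftHom a)
      = aeval (fun i => a i) := by
    rw [shiftHom, comp_aeval]
    congr 1
    funext i
    simp
  have e3 : eval (0 : Fin n → ℝ) (shiftHom a p) = aeval (fun i => a i) p := by
    rw [← aeval_eq_eval']
    exact AlgHom.congr_fun h p
  rw [e1, e2, e3, aeval_eq_eval']

lemma shiftHom_pderiv (a : Fin n → ℝ) (j : Fin n) (p : MvPolynomial (Fin n) ℝ) :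
    pderiv j (shiftHom a p) = shiftHom a (pderiv j p) := by
  induction p using MvPolynomial.induction_on with
  | C r =>
    have : shiftHom a (C r) = C r := by
      simp [shiftHom, algebraMap_eq]
    simp [this, pderiv_C]
  | add p q hp hq => simp [map_add, hp, hq]
  | mul_X p i ih =>
    have hXi : shiftHom a (X i) = X i + C (a i) := by simp [shiftHom]
    have hpd : shiftHom a (pderiv j (X i)) = pderiv j (X i + C (a i)) := by
      rcases eq_or_ne i j with rfl | hij
      · simp [pderiv_X_self, pderiv_C]
      · simp [pderiv_X_of_ne hij, pderiv_C]
    rw [map_mul, hXi, pderiv_mul]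
    simp only [pderiv_mul, map_add, map_mul, hXi, ih, hpd, pderiv_C, add_zero]

lemma shiftHom_injective (a : Fin n → ℝ) : Function.Injective (shiftHom a) := by
  have h : (aeval (fun i => X i - C (a i)) :
      MvPolynomial (Fin n) ℝ →ₐ[ℝ] MvPolynomial (Fin n) ℝ).comp (shiftHom a)
      = AlgHom.id ℝ (MvPolynomial (Fin n) ℝ) := by
    apply MvPolynomial.algHom_ext
    intro i
    simp [shiftHom]
  intro p q hpq
  have hp := AlgHom.congr_fun h p
  have hq := AlgHom.congr_fun h q
  simp only [AlgHom.coe_comp, Function.comp_apply, AlgHom.coe_id, id_eq] at hp hq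
  rw [← hp, ← hq, hpq]

lemma shiftHom_pLieDeriv (a : Fin n → ℝ) (W : Fin n → MvPolynomial (Fin n) ℝ)
    (p : MvPolynomial (Fin n) ℝ) :
    shiftHom a (pLieDeriv W p) = pLieDeriv (fun j => shiftHom a (W j)) (shiftHom a p) := by
  unfold pLieDeriv
  rw [map_sum]
  exact Finset.sum_congr rfl fun i _ => by rw [map_mul, shiftHom_pderiv]

lemma crux (S : Set (MvPolynomial (Fin n) ℝ)) (Y : Fin n → Fin n → MvPolynomial (Fin n) ℝ)
    (a : Fin n → ℝ)
    (hS0 : ∀ p ∈ S, eval a p = 0)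
    (hSX : ∀ i, ∀ p ∈ S, pLieDeriv (Y i) p ∈ S)
    (hXb : LinearIndependent ℝ fun i => pvfEval (Y i) a) :
    ∀ p ∈ S, p = 0 := by
  set τ := shiftHom a with hτ
  have h0 := crux0 (τ '' S) (fun i j => τ (Y i j)) ?_ ?_ ?_
  · intro p hp
    have : τ p = 0 := h0 (τ p) ⟨p, hp, rfl⟩
    have h00 : τ 0 = 0 := map_zero τ
    exact shiftHom_injective a (this.trans h00.symm)
  · rintro q ⟨p, hp, rfl⟩
    rw [shiftHom_eval]
    exact hS0 p hp
  · rintro i q ⟨p, hp, rfl⟩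
    rw [← shiftHom_pLieDeriv]
    exact ⟨_, hSX i p hp, rfl⟩
  · have : (fun i => pvfEval (fun j => τ (Y i j)) 0) = fun i => pvfEval (Y i) a := by
      funext i j
      show eval 0 (τ (Y i j)) = eval a (Y i j)
      have h1 : eval (0 : Fin n → ℝ) (τ (Y i j)) = coeff 0 (τ (Y i j)) :=
        (RingHom.congr_fun eval_zero (τ (Y i j))).trans (congrFun constantCoeff_eq _)
      rw [h1, hτ, shiftHom_eval]
    rw [this]
    exact hXb

end Part5

section Part6

open MvPolynomial Finset

variable {n m : ℕ} (f : Fin n → MvPolynomial (Fin n) ℝ)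
  (g : Fin m → Fin n → MvPolynomial (Fin n) ℝ)

lemma mem_strongAccFam_bracket {X h : Fin n → MvPolynomial (Fin n) ℝ} {k : ℕ}
    (hX : X ∈ insert f (Set.range g)) (hh : h ∈ strongAccFam f g k) :
    pBracket X h ∈ strongAccFam f g (k + 1) := by
  simp only [strongAccFam]
  exact Or.inr ⟨X, hX, h, hh, rfl⟩

lemma mem_G_bracket {X h : Fin n → MvPolynomial (Fin n) ℝ}
    (hX : X ∈ insert f (Set.range g)) (hh : h ∈ ⋃ k, strongAccFam f g k) :
    pBracket X h ∈ ⋃ k, strongAccFam f g k := by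
  obtain ⟨k, hk⟩ := Set.mem_iUnion.1 hh
  exact Set.mem_iUnion.2 ⟨k + 1, mem_strongAccFam_bracket f g hX hk⟩

noncomputable def MM : Submodule (MvPolynomial (Fin n) ℝ) (Fin n → MvPolynomial (Fin n) ℝ) :=
  Submodule.span _ (⋃ k, strongAccFam f g k)

lemma bracket_mem_MM {X h : Fin n → MvPolynomial (Fin n) ℝ}
    (hX : X ∈ insert f (Set.range g)) (hh : h ∈ MM f g) : pBracket X h ∈ MM f g := by
  induction hh using Submodule.span_induction with
  | mem x hx => exact Submodule.subset_span (mem_G_bracket f g hX hx)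
  | zero => rw [pBracket_zero_right]; exact Submodule.zero_mem _
  | add x y hx hy ihx ihy => rw [pBracket_add_right]; exact Submodule.add_mem _ ihx ihy
  | smul p x hx ihx =>
    rw [pBracket_smul_right]
    exact Submodule.add_mem _ (Submodule.smul_mem _ _ ihx) (Submodule.smul_mem _ _ hx)

lemma pvfEval_zero (a : Fin n → ℝ) : pvfEval (0 : Fin n → MvPolynomial (Fin n) ℝ) a = 0 := by
  funext j; simp [pvfEval]

lemma pvfEval_add (h h' : Fin n → MvPolynomial (Fin n) ℝ) (a : Fin n → ℝ) :
    pvfEval (h + h') a = pvfEval h a + pvfEval h' a := by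
  funext j; simp [pvfEval]

lemma pvfEval_neg (h : Fin n → MvPolynomial (Fin n) ℝ) (a : Fin n → ℝ) :
    pvfEval (-h) a = -pvfEval h a := by
  funext j; simp [pvfEval]

lemma pvfEval_smul (p : MvPolynomial (Fin n) ℝ) (h : Fin n → MvPolynomial (Fin n) ℝ)
    (a : Fin n → ℝ) : pvfEval (p • h) a = eval a p • pvfEval h a := by
  funext j; simp [pvfEval, smul_eq_mul]

lemma pvfEval_mem {h : Fin n → MvPolynomial (Fin n) ℝ} (a : Fin n → ℝ) (hh : h ∈ MM f g) :
    pvfEval h a ∈ strongAccSpanInf f g a := by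
  induction hh using Submodule.span_induction with
  | mem x hx => exact Submodule.subset_span ⟨x, hx, rfl⟩
  | zero => rw [pvfEval_zero]; exact Submodule.zero_mem _
  | add x y hx hy ihx ihy => rw [pvfEval_add]; exact Submodule.add_mem _ ihx ihy
  | smul p x hx ihx => rw [pvfEval_smul]; exact Submodule.smul_mem _ _ ihx

def DD : Set (MvPolynomial (Fin n) ℝ) :=
  {d | ∃ A : Matrix (Fin n) (Fin n) (MvPolynomial (Fin n) ℝ), (∀ i, A i ∈ MM f g) ∧ d = A.det}

noncomputable def J0 : Ideal (MvPolynomial (Fin n) ℝ) := Ideal.span (DD f g)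

lemma J0_vanish (a : Fin n → ℝ) (ha : Module.finrank ℝ (strongAccSpanInf f g a) < n) :
    ∀ d ∈ J0 f g, eval a d = 0 := by
  intro d hd
  induction hd using Submodule.span_induction with
  | mem x hx =>
    obtain ⟨A, hA, rfl⟩ := hx
    rw [RingHom.map_det]
    by_contra hne
    have hunit : IsUnit ((eval a).mapMatrix A) :=
      (Matrix.isUnit_iff_isUnit_det _).2 (isUnit_iff_ne_zero.2 hne)
    have hind : LinearIndependent ℝ (fun i => ((eval a).mapMatrix A) i) :=
      Matrix.linearIndependent_rows_iff_isUnit.2 hunit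
    have hrow : ∀ i, ((eval a).mapMatrix A) i ∈ strongAccSpanInf f g a := by
      intro i
      have he : ((eval a).mapMatrix A) i = pvfEval (A i) a := by funext j; rfl
      rw [he]
      exact pvfEval_mem f g a (hA i)
    have hspan : Submodule.span ℝ (Set.range fun i => ((eval a).mapMatrix A) i)
        ≤ strongAccSpanInf f g a := by
      rw [Submodule.span_le]
      rintro v ⟨i, rfl⟩
      exact hrow i
    have h1 : Module.finrank ℝ
        (Submodule.span ℝ (Set.range fun i => ((eval a).mapMatrix A) i)) = n := by
      rw [finrank_span_eq_card hind, Fintype.card_fin]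
    have h2 := Submodule.finrank_mono hspan
    omega
  | zero => simp
  | add x y hx hy ihx ihy => rw [map_add, ihx, ihy, add_zero]
  | smul p x hx ihx => rw [smul_eq_mul, map_mul, ihx, mul_zero]

lemma lie_entry (X : Fin n → MvPolynomial (Fin n) ℝ)
    (A : Matrix (Fin n) (Fin n) (MvPolynomial (Fin n) ℝ)) (i j : Fin n) :
    pLieDeriv X (A i j)
      = pBracket X (A i) j + (A * (Matrix.of fun k j' => pderiv k (X j'))) i j := by
  simp only [pLieDeriv, pBracket, Matrix.mul_apply, Matrix.of_apply]
  rw [← Finset.sum_add_distrib]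
  exact Finset.sum_congr rfl fun k _ => by ring

lemma J0_inv_base {X : Fin n → MvPolynomial (Fin n) ℝ} (hX : X ∈ insert f (Set.range g)) :
    IdealInvariant X (J0 f g) := by
  intro d hd
  induction hd using Submodule.span_induction with
  | mem d hd =>
    obtain ⟨A, hA, rfl⟩ := hd
    rw [pLieDeriv_det]
    have hsplit : ∀ r, (A.updateRow r fun j => pLieDeriv X (A r j)).det
        = (A.updateRow r (pBracket X (A r))).det
          + (A.updateRow r ((A * (Matrix.of fun k j' => pderiv k (X j'))) r)).det := by
      intro r
      have hfun : (fun j => pLieDeriv X (A r j))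
          = pBracket X (A r) + (A * Matrix.of fun k j' => pderiv k (X j')) r := by
        funext j; exact lie_entry X A r j
      rw [hfun, Matrix.det_updateRow_add]
    rw [Finset.sum_congr rfl fun r _ => hsplit r, Finset.sum_add_distrib,
      sum_det_updateRow_mul]
    apply Ideal.add_mem
    · apply Submodule.sum_mem
      intro r _
      apply Ideal.subset_span
      refine ⟨A.updateRow r (pBracket X (A r)), fun r' => ?_, rfl⟩
      by_cases hr : r' = r
      · subst hr; rw [Matrix.updateRow_self]; exact bracket_mem_MM f g hX (hA r')
      · rw [Matrix.updateRow_ne hr]; exact hA r'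
    · exact Ideal.mul_mem_left _ _ (Ideal.subset_span ⟨A, hA, rfl⟩)
  | zero => rw [pLieDeriv_zero]; exact Submodule.zero_mem _
  | add x y hx hy ihx ihy => rw [pLieDeriv_add]; exact Submodule.add_mem _ ihx ihy
  | smul p x hx ihx =>
    rw [smul_eq_mul, pLieDeriv_mul]
    exact Submodule.add_mem _ (Ideal.mul_mem_left _ _ ihx) (Ideal.mul_mem_right _ _ hx)

lemma J0_inv_G : ∀ k, ∀ h ∈ strongAccFam f g k, IdealInvariant h (J0 f g) := by
  intro k
  induction k with
  | zero =>
    rintro h ⟨i, rfl⟩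
    exact J0_inv_base f g (Set.mem_insert_of_mem _ ⟨i, rfl⟩)
  | succ k ih =>
    rintro h (hh | ⟨X, hX, h', hh', rfl⟩)
    · exact ih h hh
    · intro p hp
      rw [pLieDeriv_pBracket]
      exact Submodule.sub_mem _
        (J0_inv_base f g hX _ (ih h' hh' p hp))
        (ih h' hh' _ (J0_inv_base f g hX p hp))

end Part6

section Part7

open MvPolynomial Finset

variable {n m : ℕ} (f : Fin n → MvPolynomial (Fin n) ℝ)
  (g : Fin m → Fin n → MvPolynomial (Fin n) ℝ)

lemma extract (F : Set (Fin n → MvPolynomial (Fin n) ℝ)) (a : Fin n → ℝ)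
    (htop : Submodule.span ℝ ((fun h => pvfEval h a) '' F) = ⊤) :
    ∃ Xs : Fin n → (Fin n → MvPolynomial (Fin n) ℝ),
      (∀ i, Xs i ∈ F) ∧ LinearIndependent ℝ (fun i => pvfEval (Xs i) a) := by
  classical
  obtain ⟨t, hts, hspan, hli⟩ := exists_linearIndependent ℝ ((fun h => pvfEval h a) '' F)
  have hfin : t.Finite := hli.setFinite
  haveI : Fintype t := hfin.fintype
  have hV : Module.finrank ℝ (Fin n → ℝ) = n := by
    rw [Module.finrank_pi, Fintype.card_fin]
  have hcard : Fintype.card t = n := by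
    have h1 : Module.finrank ℝ (Submodule.span ℝ t) = t.toFinset.card :=
      finrank_span_set_eq_card hli
    rw [hspan, htop, finrank_top, hV] at h1
    rw [← Set.toFinset_card, ← h1]
  have e : Fin n ≃ t := (Fintype.equivFinOfCardEq hcard).symm
  have hch : ∀ v : t, ∃ h, h ∈ F ∧ pvfEval h a = (v : Fin n → ℝ) := by
    intro v
    obtain ⟨h, hF, hv⟩ := hts v.2
    exact ⟨h, hF, hv⟩
  choose Xs hXsF hXsv using hch
  refine ⟨fun i => Xs (e i), fun i => hXsF _, ?_⟩
  have hfam : (fun i => pvfEval (Xs (e i)) a) = (fun v : t => (v : Fin n → ℝ)) ∘ e := by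
    funext i
    exact hXsv (e i)
  rw [hfam]
  exact hli.comp e e.injective

lemma accFam_structure : ∀ k, ∀ h ∈ accFam f g k,
    h = f ∨ h ∈ (⋃ k', strongAccFam f g k')
      ∨ (∃ h' ∈ ⋃ k', strongAccFam f g k', h = -h') ∨ h = 0 := by
  intro k
  induction k with
  | zero =>
    rintro h (rfl | ⟨i, rfl⟩)
    · exact Or.inl rfl
    · exact Or.inr (Or.inl (Set.mem_iUnion.2 ⟨0, ⟨i, rfl⟩⟩))
  | succ k ih =>
    rintro h (hh | ⟨X, hX, h', hh', rfl⟩)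
    · exact ih h hh
    · rcases ih h' hh' with rfl | hG | ⟨h'', hG, rfl⟩ | rfl
      · -- h' = f
        rcases hX with rfl | ⟨i, rfl⟩
        · exact Or.inr (Or.inr (Or.inr (pBracket_self X)))
        · refine Or.inr (Or.inr (Or.inl ⟨pBracket h' (g i), ?_, ?_⟩))
          · refine Set.mem_iUnion.2 ⟨1, ?_⟩
            exact mem_strongAccFam_bracket h' g (Set.mem_insert _ _) ⟨i, rfl⟩
          · rw [pBracket_antisymm]
      · exact Or.inr (Or.inl (mem_G_bracket f g hX hG))
      · refine Or.inr (Or.inr (Or.inl ⟨pBracket X h'', mem_G_bracket f g hX hG, ?_⟩))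
        rw [pBracket_neg_right]
      · exact Or.inr (Or.inr (Or.inr (pBracket_zero_right X)))

lemma strongAccFam_subset : ∀ k, strongAccFam f g k ⊆ accFam f g k := by
  intro k
  induction k with
  | zero => exact fun h hh => Set.mem_insert_of_mem _ hh
  | succ k ih =>
    rintro h (hh | ⟨X, hX, h', hh', rfl⟩)
    · exact Or.inl (ih hh)
    · exact Or.inr ⟨X, hX, h', ih hh', rfl⟩

lemma strong_le_acc (a : Fin n → ℝ) : strongAccSpanInf f g a ≤ accSpanInf f g a := by
  apply Submodule.span_mono
  apply Set.image_mono
  exact Set.iUnion_mono fun k => strongAccFam_subset f g k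

theorem main_hard (hgen : strongSingularSetInfLt f g n ≠ Set.univ) (a : Fin n → ℝ)
    (ha : Module.finrank ℝ (strongAccSpanInf f g a) < n) :
    Module.finrank ℝ (accSpanInf f g a) < n := by
  classical
  by_contra hA
  push_neg at hA
  have hV : Module.finrank ℝ (Fin n → ℝ) = n := by
    rw [Module.finrank_pi, Fintype.card_fin]
  -- accSpanInf = ⊤
  have htopA : accSpanInf f g a = ⊤ := by
    apply Submodule.eq_top_of_finrank_eq
    have hle := Submodule.finrank_le (accSpanInf f g a)
    omega
  -- span of image of F' = ⊤
  set F' : Set (Fin n → MvPolynomial (Fin n) ℝ) :=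
    insert f (⋃ k, strongAccFam f g k) with hF'
  have hle : accSpanInf f g a ≤ Submodule.span ℝ ((fun h => pvfEval h a) '' F') := by
    rw [accSpanInf, Submodule.span_le]
    rintro v ⟨h, hh, rfl⟩
    obtain ⟨k, hk⟩ := Set.mem_iUnion.1 hh
    rcases accFam_structure f g k h hk with rfl | hG | ⟨h'', hG, rfl⟩ | rfl
    · exact Submodule.subset_span ⟨h, Set.mem_insert _ _, rfl⟩
    · exact Submodule.subset_span ⟨h, Set.mem_insert_of_mem _ hG, rfl⟩
    · show pvfEval (-h'') a ∈ _
      rw [pvfEval_neg]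
      exact Submodule.neg_mem _
        (Submodule.subset_span ⟨h'', Set.mem_insert_of_mem _ hG, rfl⟩)
    · show pvfEval 0 a ∈ _
      rw [pvfEval_zero]
      exact Submodule.zero_mem _
  have htop : Submodule.span ℝ ((fun h => pvfEval h a) '' F') = ⊤ :=
    top_unique (htopA ▸ hle)
  obtain ⟨Xs, hXsF, hXsind⟩ := extract F' a htop
  -- J0 is killed
  have hkill : ∀ p ∈ J0 f g, p = 0 := by
    apply crux (J0 f g : Set (MvPolynomial (Fin n) ℝ)) Xs a
    · exact J0_vanish f g a ha
    · intro i p hp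
      rcases hXsF i with hfi | hGi
      · rw [hfi]
        exact J0_inv_base f g (Set.mem_insert _ _) p hp
      · obtain ⟨k, hk⟩ := Set.mem_iUnion.1 hGi
        exact J0_inv_G f g k _ hk p hp
    · exact hXsind
  -- but hgen provides a nonzero element of J0
  obtain ⟨b, hb⟩ := (Set.ne_univ_iff_exists_notMem _).1 hgen
  have hbtop : strongAccSpanInf f g b = ⊤ := by
    apply Submodule.eq_top_of_finrank_eq
    have h1 : ¬ Module.finrank ℝ (strongAccSpanInf f g b) < n := hb
    have hle2 := Submodule.finrank_le (strongAccSpanInf f g b)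
    omega
  obtain ⟨Ys, hYsF, hYsind⟩ := extract (⋃ k, strongAccFam f g k) b hbtop
  set A : Matrix (Fin n) (Fin n) (MvPolynomial (Fin n) ℝ) := Matrix.of fun i j => Ys i j with hAdef
  have hdmem : A.det ∈ J0 f g := by
    apply Ideal.subset_span
    exact ⟨A, fun i => Submodule.subset_span (hYsF i), rfl⟩
  have hdzero : A.det = 0 := hkill _ hdmem
  have hune : eval b A.det ≠ 0 := by
    rw [RingHom.map_det]
    have hrows : (fun i => ((eval b).mapMatrix A) i) = fun i => pvfEval (Ys i) b := by
      funext i j; rfl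
    have hunit : IsUnit ((eval b).mapMatrix A) := by
      rw [← Matrix.linearIndependent_rows_iff_isUnit]
      have h : LinearIndependent ℝ (fun i => ((eval b).mapMatrix A) i) := by rw [hrows]; exact hYsind
      exact h
    exact ((Matrix.isUnit_iff_isUnit_det _).1 hunit).ne_zero
  rw [hdzero, map_zero] at hune
  exact hune rfl

end Part7


/-- For a generically strongly accessible polynomial control system,
the strong-accessibility singular set equals the accessibility singular set:
`S_∞^* = S_∞`. -/
theorem strong_singular_set_eq_singular_set {n m : ℕ}
    (f : Fin n → MvPolynomial (Fin n) ℝ) (g : Fin m → Fin n → MvPolynomial (Fin n) ℝ)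
    (hgen : strongSingularSetInfLt f g n ≠ Set.univ) :
    strongSingularSetInfLt f g n = singularSetInfLt f g n := by
  
  ext a
  simp only [strongSingularSetInfLt, singularSetInfLt, Set.mem_setOf_eq]
  constructor
  · exact main_hard f g hgen a
  · intro ha
    exact lt_of_le_of_lt (Submodule.finrank_mono (strong_le_acc f g a)) ha
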